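/- Let a : ℕ → ℚ and f(z) = ∑_{k≥0} a(k) z^k/k! ∈ ℚ[[z]]. Suppose F : ⋃_{r≥1} ℕ^r → ℚ satisfies, for each r ≥ 1, the generating-function identity ∑_{k₁,…,k_r ≥ 0} (z₁^{k₁}···z_r^{k_r})/(k₁!···k_r!) F(k₁,…,k_r) = f(z_r)·f(z_{r-1}+z_r)···f(z₁+···+z_r) as formal power series. Then for all r ≥ 1 and k₁,…,k_r ∈ ℕ, F(k₁,…,k_r) equals the constant term (evaluation at z = 0) of the iterated expression ∂_z^{k_r}[ f(z) ∂_z^{k_{r-1}}[ f(z) ··· ∂_z^{k₁}[f(z)] ··· ] ]. -/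

import Mathlib

/-- The iterated expression `∂^{k_r}[ f · ∂^{k_{r-1}}[ f ⋯ ∂^{k₁}[f] ⋯ ] ]`,
where the list of exponents is given in the reversed order `[k_r, …, k₁]`. -/
noncomputable def iterExpr (f : PowerSeries ℚ) : List ℕ → PowerSeries ℚ
  | [] => 1
  | k :: ks => PowerSeries.derivativeFun^[k] (f * iterExpr f ks)

open Finset Fintype PowerSeries

/-! ### Auxiliary definitions -/

/-- The finset of "upper triangular" matrices with prescribed column sums. -/
def Tri (r : ℕ) (k : Fin r → ℕ) : Finset (Fin r → Fin r → ℕ) :=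
  (Fintype.piFinset fun _ : Fin r =>
      Fintype.piFinset fun j : Fin r => Finset.range (k j + 1)).filter
    (fun ν => (∀ i j : Fin r, j < i → ν i j = 0) ∧
      ∀ j : Fin r, (∑ i : Fin r, ν i j) = k j)

/-- The big multinomial sum appearing in the hypothesis `hF`. -/
noncomputable def BS (a : ℕ → ℚ) (r : ℕ) (k : Fin r → ℕ) : ℚ :=
  ∑ ν ∈ Tri r k,
    (∏ j : Fin r, (Nat.multinomial Finset.univ (fun i : Fin r => ν i j) : ℚ))
      * ∏ i : Fin r, a (∑ j : Fin r, ν i j)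

/-- Tuples bounded by `c` with prescribed sum. -/
def Wset (s : ℕ) (c : Fin s → ℕ) (q : ℕ) : Finset (Fin s → ℕ) :=
  (Fintype.piFinset fun i => Finset.range (c i + 1)).filter fun w => (∑ i, w i) = q

/-- The modified exponent vector: restrict to the first `s+1` coordinates and add `q`
to the last of those. -/
def modK (s : ℕ) (k : Fin (s + 2) → ℕ) (q : ℕ) : Fin (s + 1) → ℕ :=
  Function.update (fun j : Fin (s + 1) => k j.castSucc) (Fin.last s)
    (k ((Fin.last s).castSucc) + q)

/-! ### Membership lemmas -/

lemma mem_Tri {r : ℕ} {k : Fin r → ℕ} {ν : Fin r → Fin r → ℕ} :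
    ν ∈ Tri r k ↔ (∀ i j : Fin r, j < i → ν i j = 0) ∧
      ∀ j : Fin r, (∑ i : Fin r, ν i j) = k j := by
  constructor
  · intro h
    exact (Finset.mem_filter.mp h).2
  · intro h
    rw [Tri, Finset.mem_filter]
    refine ⟨?_, h⟩
    rw [Fintype.mem_piFinset]
    intro i
    rw [Fintype.mem_piFinset]
    intro j
    rw [Finset.mem_range, Nat.lt_succ_iff, ← h.2 j]
    exact Finset.single_le_sum (f := fun i' => ν i' j)
      (fun _ _ => Nat.zero_le _) (Finset.mem_univ i)

lemma mem_Wset {s : ℕ} {c : Fin s → ℕ} {q : ℕ} {w : Fin s → ℕ} :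
    w ∈ Wset s c q ↔ (∀ i, w i ≤ c i) ∧ (∑ i, w i) = q := by
  simp [Wset, Fintype.mem_piFinset, Nat.lt_succ_iff]

/-! ### Multinomial helpers -/

lemma multinomial_cast_eq {n : ℕ} (f : Fin n → ℕ) :
    (Nat.multinomial Finset.univ f : ℚ) =
      (∑ i, f i).factorial / ∏ i, ((f i).factorial : ℚ) := by
  rw [eq_div_iff (Finset.prod_ne_zero_iff.mpr fun i _ =>
    Nat.cast_ne_zero.mpr (Nat.factorial_ne_zero _)), mul_comm]
  exact_mod_cast congrArg (Nat.cast : ℕ → ℚ) (Nat.multinomial_spec Finset.univ f)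

lemma multinomial_snoc_zero {n : ℕ} (g : Fin n → ℕ) :
    Nat.multinomial Finset.univ (Fin.snoc g 0 : Fin (n+1) → ℕ)
      = Nat.multinomial Finset.univ g := by
  have h1 := Nat.multinomial_spec Finset.univ (Fin.snoc g 0 : Fin (n+1) → ℕ)
  have h2 := Nat.multinomial_spec Finset.univ g
  rw [Fin.prod_univ_castSucc, Fin.sum_univ_castSucc] at h1
  simp only [Fin.snoc_castSucc, Fin.snoc_last, Nat.factorial_zero, mul_one,
    Nat.add_zero] at h1
  exact Nat.eq_of_mul_eq_mul_left
    (Finset.prod_pos fun i _ => Nat.factorial_pos _) (h1.trans h2.symm)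

/-! ### Generalized Vandermonde -/

lemma sum_Wset_succ {M : Type*} [AddCommMonoid M] (s : ℕ) (c : Fin (s + 1) → ℕ) (q : ℕ)
    (G : (Fin (s + 1) → ℕ) → M) :
    ∑ w ∈ Wset (s + 1) c q, G w =
      ∑ t ∈ Finset.range (min (c (Fin.last s)) q + 1),
        ∑ w' ∈ Wset s (fun i => c i.castSucc) (q - t), G (Fin.snoc w' t) := by
  have h1 : ∑ w ∈ Wset (s+1) c q, G w =
      ∑ x ∈ (Finset.range (min (c (Fin.last s)) q + 1)).sigma
        (fun t => Wset s (fun i => c i.castSucc) (q - t)),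
        G (Fin.snoc x.2 x.1) := by
    refine Finset.sum_bij' (fun w _ => ⟨w (Fin.last s), fun i => w i.castSucc⟩)
      (fun x _ => Fin.snoc x.2 x.1) ?_ ?_ ?_ ?_ ?_
    · intro w hw
      obtain ⟨hb, hs⟩ := mem_Wset.mp hw
      have hlast_le_q : w (Fin.last s) ≤ q := by
        rw [← hs]
        exact Finset.single_le_sum (fun i _ => Nat.zero_le _) (Finset.mem_univ _)
      rw [Finset.mem_sigma, Finset.mem_range, Nat.lt_succ_iff, le_min_iff]
      refine ⟨⟨hb _, hlast_le_q⟩, mem_Wset.mpr ⟨fun i => hb _, ?_⟩⟩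
      dsimp only
      rw [Fin.sum_univ_castSucc] at hs
      omega
    · rintro ⟨t, w'⟩ hx
      rw [Finset.mem_sigma, Finset.mem_range, Nat.lt_succ_iff, le_min_iff] at hx
      obtain ⟨⟨ht1, ht2⟩, hw'⟩ := hx
      obtain ⟨hb, hs⟩ := mem_Wset.mp hw'
      dsimp only at ht1 ht2 hb hs ⊢
      refine mem_Wset.mpr ⟨?_, ?_⟩
      · intro i
        refine Fin.lastCases ?_ (fun i => ?_) i
        · rw [Fin.snoc_last]; exact ht1
        · rw [Fin.snoc_castSucc]; exact hb i
      · rw [Fin.sum_univ_castSucc]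
        simp only [Fin.snoc_castSucc, Fin.snoc_last]
        omega
    · intro w _
      dsimp only
      exact Fin.snoc_init_self w
    · rintro ⟨t, w'⟩ _
      dsimp only
      simp only [Fin.snoc_last, Fin.snoc_castSucc]
    · intro w _
      exact congrArg G (Fin.snoc_init_self w).symm
  rw [h1, Finset.sum_sigma]

lemma vander (s : ℕ) (c : Fin s → ℕ) (q : ℕ) :
    ∑ w ∈ Wset s c q, ∏ i, (c i).choose (w i) = (∑ i, c i).choose q := by
  induction s generalizing q with
  | zero =>
    have huniv : Finset.univ (α := Fin 0 → ℕ) = {fun i => i.elim0} := by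
      apply Finset.eq_singleton_iff_unique_mem.mpr
      exact ⟨Finset.mem_univ _, fun x _ => funext fun i => i.elim0⟩
    have hpi : (Fintype.piFinset fun i : Fin 0 => Finset.range (c i + 1))
        = Finset.univ := by
      apply Finset.eq_univ_iff_forall.mpr
      intro x
      rw [Fintype.mem_piFinset]
      exact fun i => i.elim0
    cases q with
    | zero => simp [Wset, hpi, huniv]
    | succ q => simp [Wset, hpi, huniv]
  | succ s ih =>
    rw [sum_Wset_succ]
    have hprod : ∀ t : ℕ, ∀ w' : Fin s → ℕ,
        (∏ i : Fin (s+1), (c i).choose ((Fin.snoc w' t : Fin (s+1) → ℕ) i))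
          = (∏ i : Fin s, (c i.castSucc).choose (w' i)) * (c (Fin.last s)).choose t := by
      intro t w'
      rw [Fin.prod_univ_castSucc]
      simp only [Fin.snoc_castSucc, Fin.snoc_last]
    have hstep : ∀ t ∈ Finset.range (min (c (Fin.last s)) q + 1),
        (∑ w' ∈ Wset s (fun i => c i.castSucc) (q - t),
          ∏ i : Fin (s+1), (c i).choose ((Fin.snoc w' t : Fin (s+1) → ℕ) i))
        = (c (Fin.last s)).choose t * (∑ i : Fin s, c i.castSucc).choose (q - t) := by
      intro t _
      rw [Finset.sum_congr rfl fun w' _ => hprod t w', ← Finset.sum_mul, ih]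
      ring
    rw [Finset.sum_congr rfl hstep]
    rw [Fin.sum_univ_castSucc, add_comm (∑ i : Fin s, c i.castSucc) (c (Fin.last s)),
      Nat.add_choose_eq, Nat.sum_antidiagonal_eq_sum_range_succ_mk]
    apply Finset.sum_subset
    · apply Finset.range_subset_range.mpr
      omega
    · intro t ht hnt
      rw [Finset.mem_range, Nat.lt_succ_iff] at ht
      rw [Finset.mem_range, Nat.lt_succ_iff, le_min_iff, not_and_or] at hnt
      have : c (Fin.last s) < t := by omega
      rw [Nat.choose_eq_zero_of_lt this, zero_mul]

/-- The key factorial identity. -/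
lemma key (s p q m : ℕ) (c w : Fin (s + 1) → ℕ) (hw : ∀ i, w i ≤ c i)
    (hsw : ∑ i, w i = q) (hc : ∑ i, c i = m + q) :
    (Nat.multinomial Finset.univ (Fin.snoc w p : Fin (s+2) → ℕ) : ℚ)
        * Nat.multinomial Finset.univ (fun i => c i - w i) * (m + q).choose q
      = ((p + q).choose p : ℚ) * Nat.multinomial Finset.univ c
        * ∏ i, ((c i).choose (w i) : ℚ) := by
  have hsub : ∑ i, (c i - w i) = m := by
    have h1 : ∑ i, (c i - w i) + ∑ i, w i = ∑ i, c i := by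
      rw [← Finset.sum_add_distrib]
      exact Finset.sum_congr rfl fun i _ => by have := hw i; omega
    omega
  have hq : q ≤ m + q := by omega
  have hp : p ≤ p + q := by omega
  rw [multinomial_cast_eq, multinomial_cast_eq, multinomial_cast_eq,
    Nat.cast_choose ℚ hq, Nat.cast_choose ℚ hp,
    Finset.prod_congr rfl (fun (i : Fin (s+1)) (_ : i ∈ Finset.univ) =>
      Nat.cast_choose ℚ (hw i)),
    hsub, hc]
  have hsnoc_sum : ∑ i, (Fin.snoc w p : Fin (s+2) → ℕ) i = p + q := by
    rw [Fin.sum_univ_castSucc]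
    simp only [Fin.snoc_castSucc, Fin.snoc_last, hsw]
    omega
  have hsnoc_prod : ∏ i, (((Fin.snoc w p : Fin (s+2) → ℕ) i).factorial : ℚ)
      = (∏ i, ((w i).factorial : ℚ)) * p.factorial := by
    rw [Fin.prod_univ_castSucc]
    simp [Fin.snoc_castSucc, Fin.snoc_last]
  rw [hsnoc_sum, hsnoc_prod]
  have e1 : (m + q) - q = m := by omega
  have e2 : (p + q) - p = q := by omega
  rw [e1, e2]
  have hprod_div : ∏ i : Fin (s+1), (((c i).factorial : ℚ)
        / ((w i).factorial * ((c i - w i).factorial : ℚ)))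
      = (∏ i, ((c i).factorial : ℚ))
        / ((∏ i, ((w i).factorial : ℚ)) * ∏ i, (((c i - w i)).factorial : ℚ)) := by
    rw [Finset.prod_div_distrib, Finset.prod_mul_distrib]
  rw [hprod_div]
  have nz : ∀ (g : Fin (s+1) → ℕ), (∏ i, ((g i).factorial : ℚ)) ≠ 0 := fun g =>
    Finset.prod_ne_zero_iff.mpr fun i _ => Nat.cast_ne_zero.mpr (Nat.factorial_ne_zero _)
  have nzw := nz w
  have nzc := nz c
  have nzcw := nz (fun i => c i - w i)
  have nzf : ∀ t : ℕ, ((t.factorial : ℚ)) ≠ 0 := fun t =>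
    Nat.cast_ne_zero.mpr (Nat.factorial_ne_zero _)
  field_simp

/-- The reconstruction map for the surgery bijection. -/
def recon (s : ℕ) (p : ℕ) (ν'' : Fin (s + 1) → Fin (s + 1) → ℕ)
    (w : Fin (s + 1) → ℕ) : Fin (s + 2) → Fin (s + 2) → ℕ :=
  Fin.snoc
    (fun i => Fin.snoc (fun j => ν'' i j - (if j = Fin.last s then w i else 0)) (w i))
    (Fin.snoc (fun _ => 0) p)

/-- The summand of `BS`. -/
noncomputable def smd (a : ℕ → ℚ) (r : ℕ) (ν : Fin r → Fin r → ℕ) : ℚ :=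
  (∏ j : Fin r, (Nat.multinomial Finset.univ (fun i : Fin r => ν i j) : ℚ))
    * ∏ i : Fin r, a (∑ j : Fin r, ν i j)

lemma BS_eq (a : ℕ → ℚ) (r : ℕ) (k : Fin r → ℕ) :
    BS a r k = ∑ ν ∈ Tri r k, smd a r ν := rfl

lemma recon_cs_cs (s p : ℕ) (ν'' : Fin (s+1) → Fin (s+1) → ℕ) (w : Fin (s+1) → ℕ)
    (i j : Fin (s + 1)) :
    recon s p ν'' w i.castSucc j.castSucc
      = ν'' i j - (if j = Fin.last s then w i else 0) := by
  simp [recon]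

lemma recon_cs_last (s p : ℕ) (ν'' : Fin (s+1) → Fin (s+1) → ℕ) (w : Fin (s+1) → ℕ)
    (i : Fin (s + 1)) :
    recon s p ν'' w i.castSucc (Fin.last (s + 1)) = w i := by
  simp [recon]

lemma recon_last_cs (s p : ℕ) (ν'' : Fin (s+1) → Fin (s+1) → ℕ) (w : Fin (s+1) → ℕ)
    (j : Fin (s + 1)) :
    recon s p ν'' w (Fin.last (s + 1)) j.castSucc = 0 := by
  simp [recon]

lemma recon_last_last (s p : ℕ) (ν'' : Fin (s+1) → Fin (s+1) → ℕ) (w : Fin (s+1) → ℕ) :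
    recon s p ν'' w (Fin.last (s + 1)) (Fin.last (s + 1)) = p := by
  simp [recon]

lemma stepA (a : ℕ → ℚ) (s : ℕ) (k : Fin (s + 2) → ℕ) :
    BS a (s + 2) k = ∑ p ∈ Finset.range (k (Fin.last (s + 1)) + 1),
      ∑ ν'' ∈ Tri (s + 1) (modK s k (k (Fin.last (s + 1)) - p)),
        ∑ w ∈ Wset (s + 1) (fun i => ν'' i (Fin.last s)) (k (Fin.last (s + 1)) - p),
          smd a (s + 2) (recon s p ν'' w) := by
  classical
  have main : BS a (s + 2) k =
      ∑ x ∈ (Finset.range (k (Fin.last (s + 1)) + 1)).sigma (fun p =>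
          (Tri (s + 1) (modK s k (k (Fin.last (s + 1)) - p))).sigma (fun ν'' =>
            Wset (s + 1) (fun i => ν'' i (Fin.last s)) (k (Fin.last (s + 1)) - p))),
        smd a (s + 2) (recon s x.1 x.2.1 x.2.2) := by
    rw [BS_eq]
    refine Finset.sum_bij'
      (fun ν _ => (⟨ν (Fin.last (s + 1)) (Fin.last (s + 1)),
        fun i j => ν i.castSucc j.castSucc
          + (if j = Fin.last s then ν i.castSucc (Fin.last (s + 1)) else 0),
        fun i => ν i.castSucc (Fin.last (s + 1))⟩ :
          Σ _ : ℕ, Σ _ : (Fin (s+1) → Fin (s+1) → ℕ), (Fin (s+1) → ℕ)))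
      (fun x _ => recon s x.1 x.2.1 x.2.2) ?_ ?_ ?_ ?_ ?_
    · -- forward membership
      intro ν hν
      obtain ⟨tri, col⟩ := mem_Tri.mp hν
      have hLL : ν (Fin.last (s + 1)) (Fin.last (s + 1)) ≤ k (Fin.last (s + 1)) := by
        rw [← col (Fin.last (s + 1))]
        exact Finset.single_le_sum (f := fun i => ν i (Fin.last (s + 1)))
          (fun _ _ => Nat.zero_le _) (Finset.mem_univ _)
      have hcolL : ∑ i : Fin (s+1), ν i.castSucc (Fin.last (s + 1))
          = k (Fin.last (s + 1)) - ν (Fin.last (s + 1)) (Fin.last (s + 1)) := by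
        have h := col (Fin.last (s + 1))
        rw [Fin.sum_univ_castSucc] at h
        omega
      have hzero : ∀ j : Fin (s+1), ν (Fin.last (s + 1)) j.castSucc = 0 := fun j =>
        tri (Fin.last (s + 1)) j.castSucc (Fin.castSucc_lt_last j)
      rw [Finset.mem_sigma]
      constructor
      · rw [Finset.mem_range, Nat.lt_succ_iff]; exact hLL
      rw [Finset.mem_sigma]
      constructor
      · -- ν'' ∈ Tri
        rw [mem_Tri]
        constructor
        · intro i j hji
          dsimp only
          have hjlast : j ≠ Fin.last s :=
            Fin.ne_last_of_lt (hji.trans_le (Fin.le_last i))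
          rw [if_neg hjlast,
            tri i.castSucc j.castSucc (Fin.castSucc_lt_castSucc_iff.mpr hji)]
        · intro j
          dsimp only
          by_cases hj : j = Fin.last s
          · subst hj
            have hcong : ∀ i : Fin (s+1), i ∈ Finset.univ → (ν i.castSucc (Fin.last s).castSucc
                + if (Fin.last s : Fin (s+1)) = Fin.last s
                  then ν i.castSucc (Fin.last (s + 1)) else 0)
                = ν i.castSucc (Fin.last s).castSucc
                  + ν i.castSucc (Fin.last (s + 1)) := fun i _ => by rw [if_pos rfl]
            rw [Finset.sum_congr rfl hcong]
            rw [Finset.sum_add_distrib, hcolL]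
            have h2 := col (Fin.last s).castSucc
            rw [Fin.sum_univ_castSucc, hzero (Fin.last s), Nat.add_zero] at h2
            rw [h2, modK, Function.update_self]
          · have hcong : ∀ i : Fin (s+1), i ∈ Finset.univ → (ν i.castSucc j.castSucc
                + if j = Fin.last s then ν i.castSucc (Fin.last (s + 1)) else 0)
                = ν i.castSucc j.castSucc := fun i _ => by rw [if_neg hj, Nat.add_zero]
            rw [Finset.sum_congr rfl hcong, modK, Function.update_of_ne hj]
            have h2 := col j.castSucc
            rw [Fin.sum_univ_castSucc, hzero j, Nat.add_zero] at h2
            exact h2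
      · -- w ∈ Wset
        rw [mem_Wset]
        refine ⟨fun i => ?_, hcolL⟩
        dsimp only
        rw [if_pos rfl]
        omega
    · -- backward membership
      rintro ⟨p, ν'', w⟩ hx
      rw [Finset.mem_sigma] at hx
      obtain ⟨hp, hx⟩ := hx
      rw [Finset.mem_sigma] at hx
      obtain ⟨hν'', hw⟩ := hx
      rw [Finset.mem_range, Nat.lt_succ_iff] at hp
      obtain ⟨tri'', col''⟩ := mem_Tri.mp hν''
      obtain ⟨wb, ws⟩ := mem_Wset.mp hw
      dsimp only at tri'' col'' wb ws hp ⊢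
      rw [mem_Tri]
      constructor
      · intro i j
        refine Fin.lastCases (motive := fun i => j < i → recon s p ν'' w i j = 0)
          ?_ (fun i' => ?_) i
        · intro hji
          rcases Fin.exists_castSucc_eq.mpr (Fin.ne_last_of_lt hji) with ⟨j', rfl⟩
          exact recon_last_cs s p ν'' w j'
        · intro hji
          rcases Fin.exists_castSucc_eq.mpr
            (Fin.ne_last_of_lt (hji.trans (Fin.castSucc_lt_last i'))) with ⟨j', rfl⟩
          rw [recon_cs_cs, tri'' i' j' (Fin.castSucc_lt_castSucc_iff.mp hji)]
          simp
      · intro j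
        refine Fin.lastCases ?_ (fun j' => ?_) j
        · rw [Fin.sum_univ_castSucc, recon_last_last]
          rw [Finset.sum_congr rfl (fun i _ => recon_cs_last s p ν'' w i), ws]
          omega
        · rw [Fin.sum_univ_castSucc, recon_last_cs, Nat.add_zero]
          rw [Finset.sum_congr rfl (fun i _ => recon_cs_cs s p ν'' w i j')]
          by_cases hj : j' = Fin.last s
          · subst hj
            have hsub : ∑ i : Fin (s+1), (ν'' i (Fin.last s)
                - (if (Fin.last s : Fin (s+1)) = Fin.last s then w i else 0))
                = (∑ i : Fin (s+1), ν'' i (Fin.last s)) - ∑ i : Fin (s+1), w i := by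
              rw [Finset.sum_congr rfl (fun i _ => by rw [if_pos rfl])]
              have h1 : ∑ i : Fin (s+1), (ν'' i (Fin.last s) - w i)
                  + ∑ i : Fin (s+1), w i = ∑ i : Fin (s+1), ν'' i (Fin.last s) := by
                rw [← Finset.sum_add_distrib]
                exact Finset.sum_congr rfl fun i _ => by have := wb i; omega
              omega
            rw [hsub, col'' (Fin.last s), ws, modK, Function.update_self]
            omega
          · rw [Finset.sum_congr rfl (fun i _ => by rw [if_neg hj])]
            have h2 := col'' j'
            rw [modK, Function.update_of_ne hj] at h2
            exact h2
    · -- left inverse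
      intro ν hν
      obtain ⟨tri, col⟩ := mem_Tri.mp hν
      try dsimp only
      funext i j
      refine Fin.lastCases ?_ (fun i' => ?_) i
      · refine Fin.lastCases ?_ (fun j' => ?_) j
        · rw [recon_last_last]
        · rw [recon_last_cs]
          exact (tri (Fin.last (s + 1)) j'.castSucc (Fin.castSucc_lt_last j')).symm
      · refine Fin.lastCases ?_ (fun j' => ?_) j
        · rw [recon_cs_last]
        · rw [recon_cs_cs]
          try dsimp only
          by_cases hj : j' = Fin.last s
          · rw [if_pos hj]
            omega
          · rw [if_neg hj]
            omega
    · -- right inverse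
      rintro ⟨p, ν'', w⟩ hx
      rw [Finset.mem_sigma] at hx
      obtain ⟨hp, hx⟩ := hx
      rw [Finset.mem_sigma] at hx
      obtain ⟨hν'', hw⟩ := hx
      obtain ⟨wb, ws⟩ := mem_Wset.mp hw
      dsimp only at wb ws ⊢
      congr 1
      · exact recon_last_last s p ν'' w
      congr 1
      · funext i j
        rw [recon_cs_cs, recon_cs_last]
        by_cases hj : j = Fin.last s
        · subst hj
          rw [if_pos rfl]
          have := wb i
          omega
        · rw [if_neg hj]
          omega
      funext i
      rw [recon_cs_last]
    · -- weights
      intro ν hν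
      obtain ⟨tri, col⟩ := mem_Tri.mp hν
      have hrecon : recon s (ν (Fin.last (s + 1)) (Fin.last (s + 1)))
          (fun i j => ν i.castSucc j.castSucc
            + (if j = Fin.last s then ν i.castSucc (Fin.last (s + 1)) else 0))
          (fun i => ν i.castSucc (Fin.last (s + 1))) = ν := by
        funext i j
        refine Fin.lastCases ?_ (fun i' => ?_) i
        · refine Fin.lastCases ?_ (fun j' => ?_) j
          · rw [recon_last_last]
          · rw [recon_last_cs]
            exact (tri (Fin.last (s + 1)) j'.castSucc (Fin.castSucc_lt_last j')).symm
        · refine Fin.lastCases ?_ (fun j' => ?_) j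
          · rw [recon_cs_last]
          · rw [recon_cs_cs]
            try dsimp only
            by_cases hj : j' = Fin.last s
            · try rw [if_pos hj]
              omega
            · try rw [if_neg hj]
              omega
      dsimp only
      rw [hrecon]
  rw [main, Finset.sum_sigma]
  exact Finset.sum_congr rfl fun p _ => Finset.sum_sigma _ _ _

/-! ### The combinatorial recursion -/

lemma BS_one (a : ℕ → ℚ) (k : Fin 1 → ℕ) : BS a 1 k = a (k 0) := by
  have hTri : Tri 1 k = {fun _ _ => k 0} := by
    ext ν
    rw [mem_Tri, Finset.mem_singleton]
    constructor
    · rintro ⟨-, h2⟩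
      funext i j
      have h3 := h2 j
      rw [Fin.sum_univ_one] at h3
      rw [Subsingleton.elim i 0, Subsingleton.elim j 0] at *
      rw [h3, Subsingleton.elim (0 : Fin 1) j]
    · rintro rfl
      refine ⟨fun i j hij => absurd hij (by omega), fun j => ?_⟩
      rw [Fin.sum_univ_one, Subsingleton.elim (0 : Fin 1) j]
  rw [BS, hTri, Finset.sum_singleton]
  rw [Fin.prod_univ_one, Fin.prod_univ_one, Fin.sum_univ_one]
  rw [Finset.univ_unique, Nat.multinomial_singleton]
  simp [Subsingleton.elim (default : Fin 1) 0]

lemma BS_succ (a : ℕ → ℚ) (s : ℕ) (k : Fin (s + 2) → ℕ) :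
    BS a (s + 2) k = ∑ p ∈ Finset.range (k (Fin.last (s + 1)) + 1),
      ((k (Fin.last (s + 1))).choose p : ℚ) * a p
        * BS a (s + 1) (modK s k (k (Fin.last (s + 1)) - p)) := by
  classical
  rw [stepA]
  refine Finset.sum_congr rfl fun p hp => ?_
  rw [Finset.mem_range, Nat.lt_succ_iff] at hp
  rw [BS_eq, Finset.mul_sum]
  refine Finset.sum_congr rfl fun ν'' hν'' => ?_
  obtain ⟨tri'', col''⟩ := mem_Tri.mp hν''
  have hc : ∑ i, ν'' i (Fin.last s)
      = k ((Fin.last s).castSucc) + (k (Fin.last (s + 1)) - p) := by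
    have h := col'' (Fin.last s)
    rwa [modK, Function.update_self] at h
  have hd : ((k ((Fin.last s).castSucc) + (k (Fin.last (s + 1)) - p)).choose
      (k (Fin.last (s + 1)) - p) : ℚ) ≠ 0 :=
    Nat.cast_ne_zero.mpr (Nat.choose_pos (Nat.le_add_left _ _)).ne'
  have hptw : ∀ w ∈ Wset (s+1) (fun i => ν'' i (Fin.last s)) (k (Fin.last (s + 1)) - p),
      smd a (s+2) (recon s p ν'' w)
        = (((∏ j'' : Fin s,
              (Nat.multinomial Finset.univ (fun i' => ν'' i' j''.castSucc) : ℚ))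
            * ((k (Fin.last (s + 1))).choose p : ℚ)
            * (Nat.multinomial Finset.univ (fun i' => ν'' i' (Fin.last s)) : ℚ)
            * ((∏ i' : Fin (s+1), a (∑ j', ν'' i' j')) * a p))
            / ((k ((Fin.last s).castSucc) + (k (Fin.last (s + 1)) - p)).choose
                (k (Fin.last (s + 1)) - p) : ℚ))
          * ∏ i', (((ν'' i' (Fin.last s)).choose (w i') : ℕ) : ℚ) := by
    intro w hw
    obtain ⟨wb, ws⟩ := mem_Wset.mp hw
    -- row sums
    have hrowlast : (∑ j : Fin (s+2), recon s p ν'' w (Fin.last (s+1)) j) = p := by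
      rw [Fin.sum_univ_castSucc,
        Finset.sum_congr rfl (fun j' _ => recon_last_cs s p ν'' w j'),
        recon_last_last]
      simp
    have hrow : ∀ i' : Fin (s+1),
        (∑ j : Fin (s+2), recon s p ν'' w i'.castSucc j) = ∑ j', ν'' i' j' := by
      intro i'
      rw [Fin.sum_univ_castSucc, recon_cs_last,
        Finset.sum_congr rfl (fun j' _ => recon_cs_cs s p ν'' w i' j')]
      have h2 : ∑ j' : Fin (s+1), (if j' = Fin.last s then w i' else 0) = w i' := by
        simp
      have h3 : (∑ j' : Fin (s+1),
            (ν'' i' j' - if j' = Fin.last s then w i' else 0))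
          + (∑ j' : Fin (s+1), if j' = Fin.last s then w i' else 0)
          = ∑ j' : Fin (s+1), ν'' i' j' := by
        rw [← Finset.sum_add_distrib]
        refine Finset.sum_congr rfl fun j' _ => ?_
        by_cases hj : j' = Fin.last s
        · subst hj
          try rw [if_pos rfl]
          have := wb i'
          omega
        · try rw [if_neg hj]
          omega
      rw [h2] at h3
      exact h3
    have hA : (∏ i : Fin (s+2), a (∑ j, recon s p ν'' w i j))
        = (∏ i' : Fin (s+1), a (∑ j', ν'' i' j')) * a p := by
      rw [Fin.prod_univ_castSucc, hrowlast]
      exact congrArg (· * a p)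
        (Finset.prod_congr rfl fun i' _ => congrArg a (hrow i'))
    -- columns
    have hcolL : (fun i => recon s p ν'' w i (Fin.last (s+1)))
        = (Fin.snoc w p : Fin (s+2) → ℕ) := by
      funext i
      refine Fin.lastCases ?_ (fun i' => ?_) i
      · rw [recon_last_last, Fin.snoc_last]
      · rw [recon_cs_last, Fin.snoc_castSucc]
    have hcol : ∀ j' : Fin (s+1), (fun i => recon s p ν'' w i j'.castSucc)
        = (Fin.snoc (fun i' => ν'' i' j' - if j' = Fin.last s then w i' else 0) 0 :
            Fin (s+2) → ℕ) := by
      intro j'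
      funext i
      refine Fin.lastCases ?_ (fun i' => ?_) i
      · rw [recon_last_cs, Fin.snoc_last]
      · rw [recon_cs_cs, Fin.snoc_castSucc]
    have hB : (∏ j : Fin (s+2),
          (Nat.multinomial Finset.univ (fun i => recon s p ν'' w i j) : ℚ))
        = ((∏ j'' : Fin s,
            (Nat.multinomial Finset.univ (fun i' => ν'' i' j''.castSucc) : ℚ))
          * (Nat.multinomial Finset.univ
              (fun i' => ν'' i' (Fin.last s) - w i') : ℚ))
          * (Nat.multinomial Finset.univ (Fin.snoc w p : Fin (s+2) → ℕ) : ℚ) := by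
      rw [Fin.prod_univ_castSucc, hcolL]
      congr 1
      have hterm : ∀ j' : Fin (s+1), j' ∈ Finset.univ →
          (Nat.multinomial Finset.univ
            (fun i => recon s p ν'' w i j'.castSucc) : ℚ)
          = (Nat.multinomial Finset.univ
              (fun i' => ν'' i' j' - if j' = Fin.last s then w i' else 0) : ℚ) := by
        intro j' _
        rw [hcol j', multinomial_snoc_zero]
      rw [Finset.prod_congr rfl hterm, Fin.prod_univ_castSucc]
      congr 1
      · have hterm2 : ∀ j'' : Fin s, j'' ∈ Finset.univ →
            (Nat.multinomial Finset.univ (fun i' => ν'' i' j''.castSucc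
              - if j''.castSucc = Fin.last s then w i' else 0) : ℚ)
            = (Nat.multinomial Finset.univ (fun i' => ν'' i' j''.castSucc) : ℚ) := by
          intro j'' _
          have hfun : (fun i' => ν'' i' j''.castSucc
              - if j''.castSucc = Fin.last s then w i' else 0)
              = fun i' => ν'' i' j''.castSucc := by
            funext i'
            rw [if_neg (Fin.ne_last_of_lt (Fin.castSucc_lt_last j'')), Nat.sub_zero]
          rw [hfun]
        exact Finset.prod_congr rfl hterm2
      · have hfun : (fun i' => ν'' i' (Fin.last s)
            - if (Fin.last s : Fin (s+1)) = Fin.last s then w i' else 0)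
            = fun i' => ν'' i' (Fin.last s) - w i' := by
          funext i'
          rw [if_pos rfl]
        rw [hfun]
    -- the key identity
    have hkey := key s p (k (Fin.last (s + 1)) - p) (k ((Fin.last s).castSucc))
      (fun i => ν'' i (Fin.last s)) w wb ws hc
    rw [Nat.add_sub_cancel' hp] at hkey
    show (∏ j : Fin (s+2),
        (Nat.multinomial Finset.univ (fun i => recon s p ν'' w i j) : ℚ))
        * (∏ i : Fin (s+2), a (∑ j, recon s p ν'' w i j)) = _
    rw [hA, hB, div_mul_eq_mul_div, eq_div_iff hd]
    linear_combination ((∏ j'' : Fin s,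
        (Nat.multinomial Finset.univ (fun i' => ν'' i' j''.castSucc) : ℚ))
      * ((∏ i' : Fin (s+1), a (∑ j', ν'' i' j')) * a p)) * hkey
  rw [Finset.sum_congr rfl hptw, ← Finset.mul_sum]
  have hv : (∑ w ∈ Wset (s+1) (fun i => ν'' i (Fin.last s))
        (k (Fin.last (s + 1)) - p),
        ∏ i', (((ν'' i' (Fin.last s)).choose (w i') : ℕ) : ℚ))
      = ((k ((Fin.last s).castSucc) + (k (Fin.last (s + 1)) - p)).choose
          (k (Fin.last (s + 1)) - p) : ℚ) := by
    have h := vander (s+1) (fun i => ν'' i (Fin.last s)) (k (Fin.last (s + 1)) - p)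
    rw [hc] at h
    exact_mod_cast congrArg (Nat.cast : ℕ → ℚ) h
  rw [hv, div_mul_cancel₀ _ hd]
  show _ = ((k (Fin.last (s + 1))).choose p : ℚ) * a p
    * ((∏ j' : Fin (s+1), (Nat.multinomial Finset.univ (fun i' => ν'' i' j') : ℚ))
      * ∏ i' : Fin (s+1), a (∑ j', ν'' i' j'))
  rw [Fin.prod_univ_castSucc
    (f := fun j' : Fin (s+1) => (Nat.multinomial Finset.univ (fun i' => ν'' i' j') : ℚ))]
  ring

/-! ### Analytic lemmas -/

lemma coeff_iterate_derivativeFun (g : PowerSeries ℚ) (k n : ℕ) :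
    (PowerSeries.coeff n (PowerSeries.derivativeFun^[k] g)) * n.factorial
      = (PowerSeries.coeff (n + k) g) * (n + k).factorial := by
  induction k generalizing g with
  | zero => simp
  | succ k ih =>
    rw [Function.iterate_succ_apply, ih (PowerSeries.derivativeFun g),
      show PowerSeries.coeff (n + k) g.derivativeFun
          = PowerSeries.coeff (n + k + 1) g * (((n + k : ℕ) : ℚ) + 1)
        from PowerSeries.coeff_derivative g (n + k)]
    have h1 : n + (k + 1) = (n + k) + 1 := by ring
    rw [h1, Nat.factorial_succ]
    push_cast
    ring

lemma constantCoeff_iterate_derivativeFun (g : PowerSeries ℚ) (k : ℕ) :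
    PowerSeries.constantCoeff (PowerSeries.derivativeFun^[k] g)
      = PowerSeries.coeff k g * k.factorial := by
  rw [← PowerSeries.coeff_zero_eq_constantCoeff_apply]
  simpa using coeff_iterate_derivativeFun g k 0

lemma coeff_iterExpr_shift (f : PowerSeries ℚ) (h q : ℕ) (tl : List ℕ) :
    PowerSeries.coeff q (iterExpr f (h :: tl)) * q.factorial
      = PowerSeries.constantCoeff (iterExpr f ((h + q) :: tl)) := by
  rw [show iterExpr f (h :: tl) = PowerSeries.derivativeFun^[h] (f * iterExpr f tl)
      from rfl,
    show iterExpr f ((h + q) :: tl)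
        = PowerSeries.derivativeFun^[h + q] (f * iterExpr f tl) from rfl,
    constantCoeff_iterate_derivativeFun, coeff_iterate_derivativeFun,
    add_comm q h]

/-! ### Main theorem -/

theorem genfun_implies_iterated_derivative (a : ℕ → ℚ) (f : PowerSeries ℚ)
    (hf : f = PowerSeries.mk fun k => a k / k.factorial)
    (F : (r : ℕ) → (Fin r → ℕ) → ℚ)
    (hF : ∀ r : ℕ, 1 ≤ r → ∀ k : Fin r → ℕ,
      F r k = ∑ ν ∈ (Fintype.piFinset fun _ : Fin r =>
            Fintype.piFinset fun j : Fin r => Finset.range (k j + 1)).filter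
            (fun ν => (∀ i j : Fin r, j < i → ν i j = 0) ∧
              ∀ j : Fin r, (∑ i : Fin r, ν i j) = k j),
          (∏ j : Fin r, (Nat.multinomial Finset.univ (fun i : Fin r => ν i j) : ℚ))
            * ∏ i : Fin r, a (∑ j : Fin r, ν i j)) :
    ∀ r : ℕ, 1 ≤ r → ∀ k : Fin r → ℕ,
      F r k = PowerSeries.constantCoeff (iterExpr f (List.ofFn k).reverse) := by
  intro r hr
  induction r, hr using Nat.le_induction with
  | base =>
    intro k
    have h1 : (List.ofFn k).reverse = [k 0] := by
      rw [List.ofFn_succ' k, List.concat_eq_append, List.reverse_concat]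
      simp
    rw [show F 1 k = BS a 1 k from hF 1 le_rfl k, BS_one, h1,
      show iterExpr f [k 0]
        = PowerSeries.derivativeFun^[k 0] (f * iterExpr f []) from rfl,
      show iterExpr f ([] : List ℕ) = 1 from rfl, mul_one,
      constantCoeff_iterate_derivativeFun, hf, PowerSeries.coeff_mk,
      div_mul_cancel₀ _ (Nat.cast_ne_zero.mpr (Nat.factorial_ne_zero (k 0)))]
  | succ r hr ih =>
    intro k
    obtain ⟨s, rfl⟩ := Nat.exists_eq_succ_of_ne_zero (Nat.one_le_iff_ne_zero.mp hr)
    have h1 : (List.ofFn k).reverse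
        = k (Fin.last (s + 1)) :: (List.ofFn fun i : Fin (s+1) => k i.castSucc).reverse := by
      rw [List.ofFn_succ' k, List.concat_eq_append, List.reverse_concat]
    have h2 : (List.ofFn fun i : Fin (s+1) => k i.castSucc).reverse
        = k ((Fin.last s).castSucc)
          :: (List.ofFn fun i : Fin s => k i.castSucc.castSucc).reverse := by
      rw [List.ofFn_succ' (fun i : Fin (s+1) => k i.castSucc),
        List.concat_eq_append, List.reverse_concat]
    have h3 : ∀ q : ℕ, (List.ofFn (modK s k q)).reverse
        = (k ((Fin.last s).castSucc) + q)
          :: (List.ofFn fun i : Fin s => k i.castSucc.castSucc).reverse := by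
      intro q
      rw [List.ofFn_succ' (modK s k q), List.concat_eq_append, List.reverse_concat]
      congr 1
      · rw [modK, Function.update_self]
      · have hfn : (fun i : Fin s => modK s k q i.castSucc)
            = fun i => k i.castSucc.castSucc := by
          funext i
          rw [modK, Function.update_of_ne (Fin.ne_last_of_lt (Fin.castSucc_lt_last i))]
        rw [hfn]
    rw [show F (s + 1 + 1) k = BS a (s + 2) k from hF (s + 2) (by omega) k, BS_succ, h1,
      show iterExpr f (k (Fin.last (s + 1))
          :: (List.ofFn fun i : Fin (s+1) => k i.castSucc).reverse)
        = PowerSeries.derivativeFun^[k (Fin.last (s + 1))]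
          (f * iterExpr f (List.ofFn fun i : Fin (s+1) => k i.castSucc).reverse)
        from rfl,
      constantCoeff_iterate_derivativeFun, PowerSeries.coeff_mul,
      Nat.sum_antidiagonal_eq_sum_range_succ_mk, Finset.sum_mul]
    refine Finset.sum_congr rfl fun p hp => ?_
    rw [Finset.mem_range, Nat.lt_succ_iff] at hp
    rw [show BS a (s + 1) (modK s k (k (Fin.last (s + 1)) - p))
        = F (s + 1) (modK s k (k (Fin.last (s + 1)) - p))
        from (hF (s + 1) (by omega) _).symm,
      ih (modK s k (k (Fin.last (s + 1)) - p)), h3 (k (Fin.last (s + 1)) - p),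
      ← coeff_iterExpr_shift f (k ((Fin.last s).castSucc)) (k (Fin.last (s + 1)) - p)
        ((List.ofFn fun i : Fin s => k i.castSucc.castSucc).reverse),
      ← h2, hf, PowerSeries.coeff_mk,
      Nat.cast_choose ℚ hp]
    have hfac : ∀ t : ℕ, ((t.factorial : ℚ)) ≠ 0 := fun t =>
      Nat.cast_ne_zero.mpr (Nat.factorial_ne_zero _)
    field_simp
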